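/- Let G be a finite split graph with vertex partition V(G) = C ∪ I, where C is a clique and I is an independent set, let k be a positive integer, and let f_s, f_t be proper k-colorings of G. Let u, v, w ∈ I be pairwise distinct vertices with N_G(u) = N_G(v) = N_G(w), f_s(u) = f_s(v) = f_s(w), and f_t(u) = f_t(v) = f_t(w) = f_s(u). Let G′ be the graph obtained from G by deleting w, and let f′_s and f′_t be the restrictions of f_s and f_t to V(G) ∖ {w}. Then f_s and f_t are reconfigurable under color swapping in G if and only if f′_s and f′_t are reconfigurable under color swapping in G′. -/

import Mathlib

/-- A proper `k`-coloring of `G`: a map `f : V → {1,…,k}` assigning different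
colors to adjacent vertices. -/
def IsProperColoring {V : Type*} (G : SimpleGraph V) (k : ℕ) (f : V → ℕ) : Prop :=
  (∀ v, f v ∈ Finset.Icc 1 k) ∧ ∀ ⦃u w : V⦄, G.Adj u w → f u ≠ f w

/-- Two colorings are adjacent under color swapping: there is an edge `uw` whose
endpoint colors are exchanged, all other vertices keep their color, and the two
colorings are distinct. -/
def CSAdj {V : Type*} (G : SimpleGraph V) (f f' : V → ℕ) : Prop :=
  f ≠ f' ∧ ∃ u w : V, G.Adj u w ∧ f u = f' w ∧ f w = f' u ∧
    ∀ x : V, x ≠ u → x ≠ w → f x = f' x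

/-- One step of the color-swapping reconfiguration between proper `k`-colorings. -/
def CSStep {V : Type*} (G : SimpleGraph V) (k : ℕ) (f f' : V → ℕ) : Prop :=
  IsProperColoring G k f ∧ IsProperColoring G k f' ∧ CSAdj G f f'

/-- Two proper `k`-colorings are reconfigurable under color swapping. -/
def CSReconf {V : Type*} (G : SimpleGraph V) (k : ℕ) : (V → ℕ) → (V → ℕ) → Prop :=
  Relation.ReflTransGen (CSStep G k)

/-- If `u` has a non-adjacent "twin" `v` (every neighbor of `u` is a neighbor of
`v`) carrying the same color, then no color swap can have `u` as its first
endpoint: the swap would put `u`'s color on a common neighbor of `u` and `v`,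
conflicting with `v`. -/
lemma csadj_twin_ne {V : Type*} {G : SimpleGraph V} {k : ℕ} {g h : V → ℕ}
    (hph : IsProperColoring G k h) {u v : V} (huv : u ≠ v)
    (hnadj : ¬ G.Adj u v) (hN : ∀ y, G.Adj u y → G.Adj v y)
    (hgu : g u = g v) {a b : V}
    (hab : G.Adj a b) (h1 : g a = h b)
    (hoth : ∀ x, x ≠ a → x ≠ b → g x = h x) : a ≠ u := by
  rintro rfl
  have hbv : b ≠ v := fun e => hnadj (e ▸ hab)
  have hvb : G.Adj v b := hN b hab
  have hveq : g v = h v := hoth v huv.symm (Ne.symm hbv)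
  exact hph.2 hvb (hveq.symm.trans (hgu.symm.trans h1))

/-- In a color swap the two endpoints really change color. -/
lemma swap_ne {V : Type*} {g h : V → ℕ} {a b : V}
    (hne : g ≠ h) (h1 : g a = h b) (h2 : g b = h a)
    (hoth : ∀ x, x ≠ a → x ≠ b → g x = h x) : g a ≠ h a := by
  intro hEq
  apply hne
  funext x
  by_cases hxa : x = a
  · subst hxa; exact hEq
  by_cases hxb : x = b
  · subst hxb; exact h2.trans (hEq.symm.trans h1)
  · exact hoth x hxa hxb

lemma proper_restrict {V : Type*} {G : SimpleGraph V} {k : ℕ} {g : V → ℕ}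
    (hpg : IsProperColoring G k g) (s : Set V) :
    IsProperColoring (G.induce s) k (fun x => g x.1) :=
  ⟨fun x => hpg.1 x.1, fun x y hxy => hpg.2 hxy⟩

/-- safeness of the split-graph reduction rule deleting the third
of three twin vertices of the independent side with equal neighborhoods and
equal (initial and target) colors. -/
theorem stmt_18 {V : Type*} [Fintype V] (G : SimpleGraph V)
    (K S : Set V) (hcover : ∀ x, x ∈ K ∨ x ∈ S) (hdisj : Disjoint K S)
    (hK : G.IsClique K) (hS : ∀ a ∈ S, ∀ b ∈ S, ¬ G.Adj a b)
    (k : ℕ) (hk : 1 ≤ k) (fs ft : V → ℕ)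
    (hfs : IsProperColoring G k fs) (hft : IsProperColoring G k ft)
    (u v w : V) (hu : u ∈ S) (hv : v ∈ S) (hw : w ∈ S)
    (huv : u ≠ v) (huw : u ≠ w) (hvw : v ≠ w)
    (hN1 : G.neighborSet u = G.neighborSet v)
    (hN2 : G.neighborSet v = G.neighborSet w)
    (hc1 : fs u = fs v) (hc2 : fs v = fs w)
    (hc3 : ft u = fs u) (hc4 : ft v = fs u) (hc5 : ft w = fs u) :
    CSReconf G k fs ft ↔
      CSReconf (G.induce {x : V | x ≠ w}) k
        (fun x => fs x.1) (fun x => ft x.1) := by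
  classical
  have hfsv : fs v = fs u := hc1.symm
  have hfsw : fs w = fs u := (hc1.trans hc2).symm
  have hNuv : ∀ y, G.Adj u y ↔ G.Adj v y := fun y => Set.ext_iff.mp hN1 y
  have hNuw : ∀ y, G.Adj u y ↔ G.Adj w y := fun y =>
    (Set.ext_iff.mp hN1 y).trans (Set.ext_iff.mp hN2 y)
  have nuv : ¬ G.Adj u v := hS u hu v hv
  have nvu : ¬ G.Adj v u := fun h => nuv h.symm
  have nwu : ¬ G.Adj w u := fun h => hS u hu w hw h.symm
  have huW : u ∈ {x : V | x ≠ w} := huw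
  have hvW : v ∈ {x : V | x ≠ w} := hvw
  constructor
  · -- forward: project the sequence
    intro hreach
    suffices H : ∀ g, CSReconf G k fs g →
        (g u = fs u ∧ g v = fs u ∧ g w = fs u) ∧
        CSReconf (G.induce {x : V | x ≠ w}) k (fun x => fs x.1) (fun x => g x.1) from
      (H ft hreach).2
    intro g hg
    induction hg with
    | refl => exact ⟨⟨rfl, hfsv, hfsw⟩, Relation.ReflTransGen.refl⟩
    | @tail p q hp hstep ih =>
      obtain ⟨⟨hpu, hpv, hpw⟩, hrec⟩ := ih
      obtain ⟨hpp, hpq, hne, a, b, hab, h1, h2, hoth⟩ := hstep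
      have hoth' : ∀ x, x ≠ b → x ≠ a → p x = q x := fun x hx1 hx2 => hoth x hx2 hx1
      have hau : a ≠ u := csadj_twin_ne hpq huv nuv (fun y => (hNuv y).mp)
        (hpu.trans hpv.symm) hab h1 hoth
      have hbu : b ≠ u := csadj_twin_ne hpq huv nuv (fun y => (hNuv y).mp)
        (hpu.trans hpv.symm) hab.symm h2 hoth'
      have hav : a ≠ v := csadj_twin_ne hpq huv.symm nvu (fun y => (hNuv y).mpr)
        (hpv.trans hpu.symm) hab h1 hoth
      have hbv : b ≠ v := csadj_twin_ne hpq huv.symm nvu (fun y => (hNuv y).mpr)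
        (hpv.trans hpu.symm) hab.symm h2 hoth'
      have haw : a ≠ w := csadj_twin_ne hpq (Ne.symm huw) nwu (fun y => (hNuw y).mpr)
        (hpw.trans hpu.symm) hab h1 hoth
      have hbw : b ≠ w := csadj_twin_ne hpq (Ne.symm huw) nwu (fun y => (hNuw y).mpr)
        (hpw.trans hpu.symm) hab.symm h2 hoth'
      have hqu : q u = p u := (hoth u hau.symm hbu.symm).symm
      have hqv : q v = p v := (hoth v hav.symm hbv.symm).symm
      have hqw : q w = p w := (hoth w haw.symm hbw.symm).symm
      have hga : p a ≠ q a := swap_ne hne h1 h2 hoth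
      refine ⟨⟨hqu.trans hpu, hqv.trans hpv, hqw.trans hpw⟩, hrec.tail ?_⟩
      refine ⟨proper_restrict hpp _, proper_restrict hpq _,
        fun hEq => hga (congrFun hEq ⟨a, haw⟩), ⟨a, haw⟩, ⟨b, hbw⟩, hab, h1, h2, ?_⟩
      intro x hx1 hx2
      exact hoth x.1 (fun e => hx1 (Subtype.ext e)) (fun e => hx2 (Subtype.ext e))
  · -- backward: lift the sequence
    intro hreach
    set s : Set V := {x : V | x ≠ w} with hs
    set u' : ↥s := ⟨u, huW⟩ with hu'
    set v' : ↥s := ⟨v, hvW⟩ with hv'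
    have huv' : u' ≠ v' := fun e => huv (congrArg Subtype.val e)
    have nadj' : ¬ (G.induce s).Adj u' v' := fun h => nuv h
    have nadj'' : ¬ (G.induce s).Adj v' u' := fun h => nvu h
    have hN' : ∀ y : ↥s, (G.induce s).Adj u' y → (G.induce s).Adj v' y :=
      fun y hy => (hNuv y.1).mp hy
    have hN'' : ∀ y : ↥s, (G.induce s).Adj v' y → (G.induce s).Adj u' y :=
      fun y hy => (hNuv y.1).mpr hy
    have properE : ∀ (r : ↥s → ℕ), IsProperColoring (G.induce s) k r → r u' = fs u →
        IsProperColoring G k (fun x => if hx : x = w then fs u else r ⟨x, hx⟩) := by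
      intro r hr hru
      constructor
      · intro x
        by_cases hx : x = w
        · simp only [dif_pos hx]; exact hfs.1 u
        · simp only [dif_neg hx]; exact hr.1 _
      · intro x y hxy hEq
        by_cases hx : x = w
        · have hy : y ≠ w := by
            intro e; rw [hx, e] at hxy; exact G.irrefl hxy
          simp only [dif_pos hx, dif_neg hy] at hEq
          have hady : (G.induce s).Adj u' ⟨y, hy⟩ := by
            rw [hx] at hxy; exact (hNuw y).mpr hxy
          exact hr.2 hady (hru.trans hEq)
        · by_cases hy : y = w
          · simp only [dif_neg hx, dif_pos hy] at hEq
            have hadx : (G.induce s).Adj u' ⟨x, hx⟩ := by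
              rw [hy] at hxy; exact (hNuw x).mpr hxy.symm
            exact hr.2 hadx (hru.trans hEq.symm)
          · simp only [dif_neg hx, dif_neg hy] at hEq
            have hadxy : (G.induce s).Adj ⟨x, hx⟩ ⟨y, hy⟩ := hxy
            exact hr.2 hadxy hEq
    suffices H : ∀ g', CSReconf (G.induce s) k (fun x => fs x.1) g' →
        (g' u' = fs u ∧ g' v' = fs u) ∧
        CSReconf G k fs (fun x => if hx : x = w then fs u else g' ⟨x, hx⟩) by
      have h2 := (H _ hreach).2
      have hE : (fun x => if hx : x = w then fs u
          else (fun y : ↥s => ft y.1) ⟨x, hx⟩) = ft := by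
        funext x
        by_cases hx : x = w
        · rw [dif_pos hx, hx]; exact hc5.symm
        · rw [dif_neg hx]
      rwa [hE] at h2
    intro g' hg'
    induction hg' with
    | refl =>
      refine ⟨⟨rfl, hfsv⟩, ?_⟩
      have hE0 : (fun x => if hx : x = w then fs u
          else (fun y : ↥s => fs y.1) ⟨x, hx⟩) = fs := by
        funext x
        by_cases hx : x = w
        · rw [dif_pos hx, hx]; exact hfsw.symm
        · rw [dif_neg hx]
      rw [hE0]
      exact Relation.ReflTransGen.refl
    | @tail p q hp hstep ih =>
      obtain ⟨⟨hpu, hpv⟩, hrec⟩ := ih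
      obtain ⟨hpp, hpq, hne, a, b, hab, h1, h2, hoth⟩ := hstep
      have hoth' : ∀ x, x ≠ b → x ≠ a → p x = q x := fun x hx1 hx2 => hoth x hx2 hx1
      have hau : a ≠ u' := csadj_twin_ne hpq huv' nadj' hN'
        (hpu.trans hpv.symm) hab h1 hoth
      have hbu : b ≠ u' := csadj_twin_ne hpq huv' nadj' hN'
        (hpu.trans hpv.symm) hab.symm h2 hoth'
      have hav : a ≠ v' := csadj_twin_ne hpq huv'.symm nadj'' hN''
        (hpv.trans hpu.symm) hab h1 hoth
      have hbv : b ≠ v' := csadj_twin_ne hpq huv'.symm nadj'' hN''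
        (hpv.trans hpu.symm) hab.symm h2 hoth'
      have hqu : q u' = p u' := (hoth u' hau.symm hbu.symm).symm
      have hqv : q v' = p v' := (hoth v' hav.symm hbv.symm).symm
      have hga : p a ≠ q a := swap_ne hne h1 h2 hoth
      have haw : (a : V) ≠ w := a.2
      have hbw : (b : V) ≠ w := b.2
      refine ⟨⟨hqu.trans hpu, hqv.trans hpv⟩, hrec.tail ?_⟩
      refine ⟨properE p hpp hpu, properE q hpq (hqu.trans hpu), ?_, a.1, b.1, hab, ?_, ?_, ?_⟩
      · intro hEq
        have h3 := congrFun hEq a.1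
        simp only [dif_neg haw] at h3
        exact hga h3
      · simp only [dif_neg haw, dif_neg hbw]; exact h1
      · simp only [dif_neg haw, dif_neg hbw]; exact h2
      · intro x hx1 hx2
        by_cases hx : x = w
        · simp only [dif_pos hx]
        · simp only [dif_neg hx]
          exact hoth ⟨x, hx⟩ (fun e => hx1 (congrArg Subtype.val e))
            (fun e => hx2 (congrArg Subtype.val e))
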